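/- There exists an absolute constant C > 0 with the following property. Let T, U : (0,∞) → ℝ be functions and K > 0 a constant such that |T(y)| ≤ min(1, y^{−2}) for all y > 0, |U(y)| ≤ K·(1 + log(1/y)) for all 0 < y ≤ 1, and |U(y)| ≤ K·y^{−2} for all y > 1. Then for every real x ≥ 2 the double series converges and Σ_{m ≥ 1} Σ_{n ≥ 1} τ(m)·(log(2·gcd(m,n)))²·|T(n/x)|·|U(m/x²)| ≤ C·K·x³·log x. -/

import Mathlib

open Filter Topology

open Filter Topology

/-- Telescoping sum over `ℕ+`. -/
lemma pnat_telescope (F : ℕ+ → ℝ)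
    (h0 : Tendsto (fun j : ℕ => F j.succPNat) atTop (𝓝 0))
    (hm : ∀ k : ℕ+, F (k + 1) ≤ F k) :
    HasSum (fun k : ℕ+ => F k - F (k + 1)) (F 1) := by
  rw [← Equiv.hasSum_iff (Equiv.pnatEquivNat.symm)]
  have hsucc : ∀ j : ℕ, (j.succPNat + 1 : ℕ+) = (j + 1).succPNat := by
    intro j; apply PNat.coe_injective; simp [Nat.succPNat, PNat.add_coe]; rfl
  have key : HasSum (fun j : ℕ => F j.succPNat - F (j + 1).succPNat) (F (0 : ℕ).succPNat) := by
    have hnn : ∀ j : ℕ, 0 ≤ F j.succPNat - F (j + 1).succPNat := by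
      intro j
      have := hm (j.succPNat)
      rw [hsucc j] at this
      linarith
    rw [hasSum_iff_tendsto_nat_of_nonneg hnn]
    have heq : ∀ n : ℕ, ∑ i ∈ Finset.range n, (F i.succPNat - F (i + 1).succPNat)
        = F (0 : ℕ).succPNat - F n.succPNat := by
      intro n; exact Finset.sum_range_sub' (fun i => F i.succPNat) n
    simp only [heq]
    simpa using tendsto_const_nhds.sub h0
  have : (0 : ℕ).succPNat = 1 := rfl
  rw [this] at key
  have hfe : ((fun k : ℕ+ => F k - F (k + 1)) ∘ ⇑Equiv.pnatEquivNat.symm)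
      = fun j : ℕ => F j.succPNat - F (j + 1).succPNat := by
    funext j
    simp [Function.comp, hsucc j, Equiv.pnatEquivNat]
  rw [hfe]
  exact key


lemma pnat_one_le_cast (k : ℕ+) : (1:ℝ) ≤ ((k:ℕ):ℝ) := by
  exact_mod_cast k.one_le

lemma minsum {Y : ℝ} (hY : 0 < Y) :
    Summable (fun k : ℕ+ => min 1 ((Y / ((k:ℕ):ℝ)) ^ 2)) ∧
    ∑' k : ℕ+, min 1 ((Y / ((k:ℕ):ℝ)) ^ 2) ≤ 4 * Y := by
  set F : ℕ+ → ℝ := fun k => Y ^ 2 / (((k:ℕ):ℝ) - 1 + Y) with hF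
  have hden : ∀ k : ℕ+, 0 < ((k:ℕ):ℝ) - 1 + Y := by
    intro k; have := pnat_one_le_cast k; linarith
  have hcast : ∀ k : ℕ+, (((k + 1 : ℕ+):ℕ):ℝ) = ((k:ℕ):ℝ) + 1 := by
    intro k; push_cast [PNat.add_coe, PNat.one_coe]; ring
  have h0 : Tendsto (fun j : ℕ => F j.succPNat) atTop (𝓝 0) := by
    have hden2 : Tendsto (fun j : ℕ => ((j.succPNat : ℕ):ℝ) - 1 + Y) atTop atTop := by
      have h1 : Tendsto (fun j : ℕ => (j:ℝ) + Y) atTop atTop :=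
        tendsto_atTop_add_const_right _ Y tendsto_natCast_atTop_atTop
      refine h1.congr fun j => ?_
      simp [Nat.succPNat]
      try ring
    have h2 := (hden2.inv_tendsto_atTop).const_mul (Y ^ 2)
    rw [mul_zero] at h2
    refine h2.congr fun j => ?_
    simp only [hF, div_eq_mul_inv, Pi.inv_apply]
  have hm : ∀ k : ℕ+, F (k + 1) ≤ F k := by
    intro k
    rw [hF]
    simp only
    rw [hcast k]
    gcongr
    · exact hden k
    · linarith
  have maj := (pnat_telescope F h0 hm).mul_left 4
  have hF1 : F 1 = Y := by
    rw [hF]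
    simp only [PNat.one_coe, Nat.cast_one]
    rw [show (1:ℝ) - 1 + Y = Y by ring, sq, mul_div_assoc, div_self hY.ne', mul_one]
  rw [hF1] at maj
  have hpt : ∀ k : ℕ+, min 1 ((Y / ((k:ℕ):ℝ)) ^ 2) ≤ 4 * (F k - F (k + 1)) := by
    intro k
    set t := ((k:ℕ):ℝ) with htdef
    have ht1 : 1 ≤ t := pnat_one_le_cast k
    have hd1 : 0 < t - 1 + Y := hden k
    have hd2 : 0 < t + Y := by linarith
    have hFk1 : F (k + 1) = Y ^ 2 / (t + Y) := by
      rw [hF]; simp only; rw [hcast k]; ring_nf; rfl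
    have hdiff : F k - F (k + 1) = Y ^ 2 / ((t - 1 + Y) * (t + Y)) := by
      rw [hFk1, hF]
      simp only
      rw [div_sub_div _ _ hd1.ne' hd2.ne', div_eq_div_iff (by positivity) (by positivity)]
      ring
    rw [hdiff]
    rcases le_total t Y with h | h
    · have h4 : (1:ℝ) ≤ 4 * (Y ^ 2 / ((t - 1 + Y) * (t + Y))) := by
        rw [← mul_div_assoc, le_div_iff₀ (by positivity)]
        nlinarith
      exact le_trans (min_le_left _ _) h4
    · refine le_trans (min_le_right _ _) ?_
      rw [div_pow, ← mul_div_assoc, div_le_div_iff₀ (by positivity) (by positivity)]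
      nlinarith [sq_nonneg Y, mul_le_mul_of_nonneg_left h hY.le]
  have hnn : ∀ k : ℕ+, 0 ≤ min 1 ((Y / ((k:ℕ):ℝ)) ^ 2) := by
    intro k; exact le_min zero_le_one (by positivity)
  have hsm : Summable (fun k : ℕ+ => min 1 ((Y / ((k:ℕ):ℝ)) ^ 2)) :=
    Summable.of_nonneg_of_le hnn hpt maj.summable
  refine ⟨hsm, ?_⟩
  calc ∑' k : ℕ+, min 1 ((Y / ((k:ℕ):ℝ)) ^ 2)
      ≤ ∑' k : ℕ+, 4 * (F k - F (k + 1)) := Summable.tsum_le_tsum hpt hsm maj.summable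
    _ = 4 * Y := maj.tsum_eq
lemma log_fact_bound {Z : ℝ} (hZ : 0 < Z) :
    (⌊Z⌋₊ : ℝ) * Real.log Z ≤ Real.log (Nat.factorial ⌊Z⌋₊) + Z := by
  set N := ⌊Z⌋₊ with hN
  have h1 : Z ^ N ≤ (N.factorial : ℝ) * Real.exp Z := by
    have h := Real.pow_div_factorial_le_exp Z hZ.le N
    rw [div_le_iff₀ (by positivity)] at h
    linarith
  have h2 := Real.log_le_log (by positivity) h1
  rw [Real.log_pow, Real.log_mul (by positivity) (Real.exp_ne_zero _), Real.log_exp] at h2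
  linarith

lemma logpart {Z : ℝ} (hZ : 0 < Z) :
    Summable (fun q : ℕ+ => if ((q:ℕ):ℝ) ≤ Z then Real.log (Z / ((q:ℕ):ℝ)) else 0) ∧
    ∑' q : ℕ+, (if ((q:ℕ):ℝ) ≤ Z then Real.log (Z / ((q:ℕ):ℝ)) else 0) ≤ Z := by
  set N := ⌊Z⌋₊ with hN
  set s : Finset ℕ+ := (Finset.range N).map ⟨Nat.succPNat, Nat.succPNat_injective⟩ with hs
  have hout : ∀ q : ℕ+, q ∉ s →
      (if ((q:ℕ):ℝ) ≤ Z then Real.log (Z / ((q:ℕ):ℝ)) else 0) = 0 := by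
    intro q hq
    rw [if_neg]
    intro hle
    apply hq
    rw [hs, Finset.mem_map]
    have hq1 : 1 ≤ (q:ℕ) := q.one_le
    have hqN : (q:ℕ) ≤ N := Nat.le_floor hle
    refine ⟨(q:ℕ) - 1, ?_, ?_⟩
    · rw [Finset.mem_range]; omega
    · apply PNat.coe_injective
      simp only [Function.Embedding.coeFn_mk, Nat.succPNat_coe]
      omega
  have hsummable := summable_of_ne_finset_zero (L := SummationFilter.unconditional ℕ+) hout
  refine ⟨hsummable, ?_⟩
  rw [tsum_eq_sum hout, Finset.sum_map]
  simp only [Function.Embedding.coeFn_mk]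
  have hterm : ∀ j ∈ Finset.range N,
      (if (((Nat.succPNat j : ℕ+):ℕ):ℝ) ≤ Z then
        Real.log (Z / (((Nat.succPNat j : ℕ+):ℕ):ℝ)) else 0)
      = Real.log Z - Real.log ((j:ℝ) + 1) := by
    intro j hj
    rw [Finset.mem_range] at hj
    have hcast : (((Nat.succPNat j : ℕ+):ℕ):ℝ) = (j:ℝ) + 1 := by
      simp [Nat.succPNat_coe]
    have hle : ((j:ℝ) + 1) ≤ Z := by
      have h1 : (j + 1 : ℕ) ≤ N := hj
      have h2 : ((j + 1 : ℕ) : ℝ) ≤ (N : ℝ) := by exact_mod_cast h1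
      have h3 : (N : ℝ) ≤ Z := Nat.floor_le hZ.le
      push_cast at h2
      linarith
    rw [hcast, if_pos hle, Real.log_div hZ.ne' (by positivity)]
  rw [Finset.sum_congr rfl hterm, Finset.sum_sub_distrib, Finset.sum_const, Finset.card_range]
  have hprod : ∑ j ∈ Finset.range N, Real.log ((j:ℝ) + 1) = Real.log (N.factorial : ℝ) := by
    rw [← Real.log_prod (s := Finset.range N) (f := fun j : ℕ => (j:ℝ) + 1) (fun j _ => by positivity)]
    congr 1
    rw [← Finset.prod_range_add_one_eq_factorial N]
    push_cast
    rfl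
  rw [hprod, nsmul_eq_mul]
  linarith [log_fact_bound hZ]

/-- The majorant for `τ(k)`-weighted `U` sums. -/
noncomputable def vfun (Z : ℝ) (q : ℕ+) : ℝ :=
  if ((q:ℕ):ℝ) ≤ Z then 1 + Real.log (Z / ((q:ℕ):ℝ)) else (Z / ((q:ℕ):ℝ)) ^ 2

lemma pnat_cast_pos (q : ℕ+) : (0:ℝ) < ((q:ℕ):ℝ) := lt_of_lt_of_le one_pos (pnat_one_le_cast q)

lemma vfun_nonneg {Z : ℝ} (hZ : 0 < Z) (q : ℕ+) : 0 ≤ vfun Z q := by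
  rw [vfun]
  split_ifs with h
  · have h1 : 1 ≤ Z / ((q:ℕ):ℝ) := (one_le_div (pnat_cast_pos q)).2 h
    have := Real.log_nonneg h1
    linarith
  · positivity

lemma vfun_eq {Z : ℝ} (hZ : 0 < Z) (q : ℕ+) :
    vfun Z q = min 1 ((Z / ((q:ℕ):ℝ)) ^ 2)
      + (if ((q:ℕ):ℝ) ≤ Z then Real.log (Z / ((q:ℕ):ℝ)) else 0) := by
  by_cases h : ((q:ℕ):ℝ) ≤ Z
  · rw [vfun, if_pos h, if_pos h, min_eq_left]
    have h1 : 1 ≤ Z / ((q:ℕ):ℝ) := (one_le_div (pnat_cast_pos q)).2 h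
    nlinarith
  · rw [vfun, if_neg h, if_neg h, min_eq_right, add_zero]
    have h1 : Z / ((q:ℕ):ℝ) ≤ 1 := by
      rw [div_le_one (pnat_cast_pos q)]
      linarith [not_le.1 h]
    have h0 : 0 ≤ Z / ((q:ℕ):ℝ) := by positivity
    nlinarith

lemma vfun_sum {Z : ℝ} (hZ : 0 < Z) :
    Summable (vfun Z) ∧ ∑' q : ℕ+, vfun Z q ≤ 5 * Z := by
  have hmin := minsum hZ
  have hlp := logpart hZ
  have hfun : vfun Z = fun q : ℕ+ => min 1 ((Z / ((q:ℕ):ℝ)) ^ 2)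
      + (if ((q:ℕ):ℝ) ≤ Z then Real.log (Z / ((q:ℕ):ℝ)) else 0) := by
    funext q; exact vfun_eq hZ q
  constructor
  · rw [hfun]; exact hmin.1.add hlp.1
  · rw [hfun, Summable.tsum_add hmin.1 hlp.1]
    linarith [hmin.2, hlp.2]

lemma vfun_sum_small {Z : ℝ} (hZ : 0 < Z) (hZ1 : Z ≤ 1) :
    ∑' q : ℕ+, vfun Z q ≤ 4 * Z ^ 2 := by
  have hmin1 := minsum one_pos
  have hpt : ∀ q : ℕ+, vfun Z q ≤ Z ^ 2 * min 1 (((1:ℝ) / ((q:ℕ):ℝ)) ^ 2) := by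
    intro q
    have hqpos := pnat_cast_pos q
    have hq1 := pnat_one_le_cast q
    rw [vfun]
    split_ifs with h
    · have hqe : ((q:ℕ):ℝ) = 1 := le_antisymm (h.trans hZ1) hq1
      have hZe : Z = 1 := le_antisymm hZ1 (by rw [← hqe]; exact h)
      rw [hqe, hZe]
      norm_num
    · have hle : ((1:ℝ) / ((q:ℕ):ℝ)) ^ 2 ≤ 1 := by
        rw [div_pow, one_pow, div_le_one (by positivity)]
        nlinarith
      rw [min_eq_right hle]
      rw [div_pow, div_pow, one_pow, mul_div_assoc']
      gcongr
      nlinarith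
  have hs1 : Summable (vfun Z) := (vfun_sum hZ).1
  have hs2 : Summable (fun q : ℕ+ => Z ^ 2 * min 1 (((1:ℝ) / ((q:ℕ):ℝ)) ^ 2)) :=
    hmin1.1.mul_left _
  calc ∑' q : ℕ+, vfun Z q ≤ ∑' q : ℕ+, Z ^ 2 * min 1 (((1:ℝ) / ((q:ℕ):ℝ)) ^ 2) :=
        Summable.tsum_le_tsum hpt hs1 hs2
    _ = Z ^ 2 * ∑' q : ℕ+, min 1 (((1:ℝ) / ((q:ℕ):ℝ)) ^ 2) := tsum_mul_left
    _ ≤ Z ^ 2 * (4 * 1) := by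
        have h4 := hmin1.2
        have h5 : ∑' q : ℕ+, min 1 (((1:ℝ) / ((q:ℕ):ℝ)) ^ 2) ≤ 4 * 1 := by linarith
        exact mul_le_mul_of_nonneg_left h5 (by positivity)
    _ ≤ 4 * Z ^ 2 := by nlinarith
lemma vfun_mul {Y : ℝ} (hY : 0 < Y) (p q : ℕ+) :
    vfun Y (p * q) = vfun (Y / ((p:ℕ):ℝ)) q := by
  have hp := pnat_cast_pos p
  have hc : (((p * q : ℕ+):ℕ):ℝ) = ((p:ℕ):ℝ) * ((q:ℕ):ℝ) := by
    push_cast [PNat.mul_coe]; ring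
  rw [vfun, vfun, hc]
  have hiff : (((p:ℕ):ℝ) * ((q:ℕ):ℝ) ≤ Y) ↔ (((q:ℕ):ℝ) ≤ Y / ((p:ℕ):ℝ)) := by
    rw [le_div_iff₀ hp, mul_comm]
  rw [show Y / (((p:ℕ):ℝ) * ((q:ℕ):ℝ)) = Y / ((p:ℕ):ℝ) / ((q:ℕ):ℝ) from (div_div _ _ _).symm]
  exact if_congr hiff rfl rfl

lemma hb_sum {Y : ℝ} (hY : 0 < Y) :
    Summable (fun p : ℕ+ => if ((p:ℕ):ℝ) ≤ Y then 5 * (Y / ((p:ℕ):ℝ)) else 0) ∧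
    ∑' p : ℕ+, (if ((p:ℕ):ℝ) ≤ Y then 5 * (Y / ((p:ℕ):ℝ)) else 0)
      ≤ 5 * Y * (1 + max 0 (Real.log Y)) := by
  set N := ⌊Y⌋₊ with hN
  set s : Finset ℕ+ := (Finset.range N).map ⟨Nat.succPNat, Nat.succPNat_injective⟩ with hs
  have hout : ∀ q : ℕ+, q ∉ s →
      (if ((q:ℕ):ℝ) ≤ Y then 5 * (Y / ((q:ℕ):ℝ)) else 0) = 0 := by
    intro q hq
    rw [if_neg]
    intro hle
    apply hq
    rw [hs, Finset.mem_map]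
    have hq1 : 1 ≤ (q:ℕ) := q.one_le
    have hqN : (q:ℕ) ≤ N := Nat.le_floor hle
    refine ⟨(q:ℕ) - 1, ?_, ?_⟩
    · rw [Finset.mem_range]; omega
    · apply PNat.coe_injective
      simp only [Function.Embedding.coeFn_mk, Nat.succPNat_coe]
      omega
  have hsummable := summable_of_ne_finset_zero (L := SummationFilter.unconditional ℕ+) hout
  refine ⟨hsummable, ?_⟩
  have hmax : (0:ℝ) ≤ 1 + max 0 (Real.log Y) := by
    have := le_max_left (0:ℝ) (Real.log Y); linarith
  rw [tsum_eq_sum hout, Finset.sum_map]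
  simp only [Function.Embedding.coeFn_mk]
  rcases lt_or_ge Y 1 with hY1 | hY1
  · have hN0 : N = 0 := by rw [hN]; exact Nat.floor_eq_zero.2 hY1
    rw [hN0]
    simp
    positivity
  · have hterm : ∀ j ∈ Finset.range N,
        (if (((Nat.succPNat j : ℕ+):ℕ):ℝ) ≤ Y then
          5 * (Y / (((Nat.succPNat j : ℕ+):ℕ):ℝ)) else 0)
        = 5 * Y * (((j:ℝ) + 1))⁻¹ := by
      intro j hj
      rw [Finset.mem_range] at hj
      have hcast : (((Nat.succPNat j : ℕ+):ℕ):ℝ) = (j:ℝ) + 1 := by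
        simp [Nat.succPNat_coe]
      have hle : ((j:ℝ) + 1) ≤ Y := by
        have h1 : (j + 1 : ℕ) ≤ N := hj
        have h2 : ((j + 1 : ℕ) : ℝ) ≤ (N : ℝ) := by exact_mod_cast h1
        have h3 : (N : ℝ) ≤ Y := Nat.floor_le hY.le
        push_cast at h2
        linarith
      rw [hcast, if_pos hle]
      rw [div_eq_mul_inv]
      ring
    rw [Finset.sum_congr rfl hterm, ← Finset.mul_sum]
    have hharm : ∑ j ∈ Finset.range N, (((j:ℝ) + 1))⁻¹ = ((harmonic N : ℚ) : ℝ) := by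
      rw [harmonic]
      push_cast
      rfl
    rw [hharm]
    have hlog : ((harmonic N : ℚ) : ℝ) ≤ 1 + Real.log Y := by
      rw [hN]
      exact harmonic_floor_le_one_add_log Y hY1
    have hmaxeq : max 0 (Real.log Y) = Real.log Y := max_eq_right (Real.log_nonneg hY1)
    rw [hmaxeq]
    have h5 : (0:ℝ) ≤ 5 * Y := by positivity
    nlinarith [hlog, hY]

lemma pairv {Y : ℝ} (hY : 0 < Y) :
    Summable (fun pq : ℕ+ × ℕ+ => vfun Y (pq.1 * pq.2)) ∧
    ∑' pq : ℕ+ × ℕ+, vfun Y (pq.1 * pq.2) ≤ 21 * Y * (1 + max 0 (Real.log Y)) := by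
  have hminY := minsum hY
  set hb : ℕ+ → ℝ := fun p => if ((p:ℕ):ℝ) ≤ Y then 5 * (Y / ((p:ℕ):ℝ)) else 0 with hhb
  set mb : ℕ+ → ℝ := fun p => if ((p:ℕ):ℝ) ≤ Y then 0 else 4 * (Y / ((p:ℕ):ℝ)) ^ 2 with hmb
  have hmb_le : ∀ p : ℕ+, mb p ≤ 4 * min 1 ((Y / ((p:ℕ):ℝ)) ^ 2) := by
    intro p
    rw [hmb]
    simp only
    split_ifs with h
    · have := le_min (zero_le_one) (sq_nonneg (Y / ((p:ℕ):ℝ)))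
      positivity
    · have h1 : (Y / ((p:ℕ):ℝ)) ≤ 1 := by
        rw [div_le_one (pnat_cast_pos p)]
        linarith [not_le.1 h]
      have h0 : (0:ℝ) ≤ Y / ((p:ℕ):ℝ) := by positivity
      rw [min_eq_right (by nlinarith)]
  have hmb_nonneg : ∀ p : ℕ+, 0 ≤ mb p := by
    intro p; simp only [hmb]; split_ifs <;> positivity
  have hmb_summable : Summable mb :=
    Summable.of_nonneg_of_le hmb_nonneg hmb_le (hminY.1.mul_left 4)
  have hmb_tsum : ∑' p, mb p ≤ 16 * Y := by
    calc ∑' p, mb p ≤ ∑' p : ℕ+, 4 * min 1 ((Y / ((p:ℕ):ℝ)) ^ 2) :=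
          Summable.tsum_le_tsum hmb_le hmb_summable (hminY.1.mul_left 4)
      _ = 4 * ∑' p : ℕ+, min 1 ((Y / ((p:ℕ):ℝ)) ^ 2) := tsum_mul_left
      _ ≤ 4 * (4 * Y) := by nlinarith [hminY.2]
      _ = 16 * Y := by ring
  have hslice : ∀ p : ℕ+, (fun q : ℕ+ => vfun Y (p * q)) = vfun (Y / ((p:ℕ):ℝ)) := by
    intro p; funext q; exact vfun_mul hY p q
  have hZp : ∀ p : ℕ+, 0 < Y / ((p:ℕ):ℝ) := fun p => div_pos hY (pnat_cast_pos p)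
  have hslice_sum : ∀ p : ℕ+, Summable (fun q : ℕ+ => vfun Y (p * q)) := by
    intro p; rw [hslice p]; exact (vfun_sum (hZp p)).1
  have houter_le : ∀ p : ℕ+, ∑' q : ℕ+, vfun Y (p * q) ≤ hb p + mb p := by
    intro p
    rw [hslice p]
    rcases le_or_gt ((p:ℕ):ℝ) Y with h | h
    · have h1 := (vfun_sum (hZp p)).2
      simp only [hhb, hmb, if_pos h]
      rw [add_zero]
      calc ∑' q, vfun (Y / ((p:ℕ):ℝ)) q ≤ 5 * (Y / ((p:ℕ):ℝ)) := h1
        _ = 5 * (Y / ((p:ℕ):ℝ)) := rfl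
    · have hle1 : Y / ((p:ℕ):ℝ) ≤ 1 := by
        rw [div_le_one (pnat_cast_pos p)]; linarith
      have h1 := vfun_sum_small (hZp p) hle1
      simp only [hhb, hmb, if_neg (not_le.2 h)]
      rw [zero_add]
      exact h1
  have houter_nonneg : ∀ p : ℕ+, 0 ≤ ∑' q : ℕ+, vfun Y (p * q) :=
    fun p => tsum_nonneg (fun q => vfun_nonneg hY _)
  have hbm_summable : Summable (fun p => hb p + mb p) := (hb_sum hY).1.add hmb_summable
  have houter_summable : Summable (fun p : ℕ+ => ∑' q : ℕ+, vfun Y (p * q)) :=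
    Summable.of_nonneg_of_le houter_nonneg houter_le hbm_summable
  have hnn : (0:ℕ+ × ℕ+ → ℝ) ≤ (fun pq : ℕ+ × ℕ+ => vfun Y (pq.1 * pq.2)) := by
    intro pq; exact vfun_nonneg hY _
  have hpair : Summable (fun pq : ℕ+ × ℕ+ => vfun Y (pq.1 * pq.2)) :=
    (summable_prod_of_nonneg hnn).2 ⟨fun p => hslice_sum p, houter_summable⟩
  refine ⟨hpair, ?_⟩
  rw [Summable.tsum_prod' hpair (fun p => hslice_sum p)]
  have hmax : (0:ℝ) ≤ max 0 (Real.log Y) := le_max_left _ _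
  calc ∑' p : ℕ+, ∑' q : ℕ+, vfun Y (p * q)
      ≤ ∑' p : ℕ+, (hb p + mb p) := Summable.tsum_le_tsum houter_le houter_summable hbm_summable
    _ = (∑' p, hb p) + ∑' p, mb p := Summable.tsum_add (hb_sum hY).1 hmb_summable
    _ ≤ 5 * Y * (1 + max 0 (Real.log Y)) + 16 * Y := by
        have := (hb_sum hY).2
        have := hmb_tsum
        linarith
    _ ≤ 21 * Y * (1 + max 0 (Real.log Y)) := by nlinarith [hY, hmax]
lemma tau_mul_le (m n : ℕ) (hm : m ≠ 0) (hn : n ≠ 0) :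
    (m * n).divisors.card ≤ m.divisors.card * n.divisors.card := by
  rw [← Finset.card_product]
  apply Finset.card_le_card_of_injOn (fun e => (Nat.gcd e m, e / Nat.gcd e m))
  · intro e he
    rw [Finset.mem_coe, Nat.mem_divisors] at he
    have he0 : e ≠ 0 := by
      rintro rfl
      exact (mul_ne_zero hm hn) (Nat.zero_dvd.1 he.1)
    have hg0 : 0 < Nat.gcd e m := Nat.gcd_pos_of_pos_left m (Nat.pos_of_ne_zero he0)
    rw [Finset.mem_coe, Finset.mem_product, Nat.mem_divisors, Nat.mem_divisors]
    refine ⟨⟨Nat.gcd_dvd_right e m, hm⟩, ?_, hn⟩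
    have hco : Nat.Coprime (e / Nat.gcd e m) (m / Nat.gcd e m) :=
      Nat.coprime_div_gcd_div_gcd hg0
    have hdvd : (e / Nat.gcd e m) ∣ (m / Nat.gcd e m) * n := by
      have h2 : Nat.gcd e m * (e / Nat.gcd e m) = e := Nat.mul_div_cancel' (Nat.gcd_dvd_left e m)
      have h3 : Nat.gcd e m * (m / Nat.gcd e m) = m := Nat.mul_div_cancel' (Nat.gcd_dvd_right e m)
      have h4 : Nat.gcd e m * (e / Nat.gcd e m) ∣ Nat.gcd e m * ((m / Nat.gcd e m) * n) := by
        rw [h2, ← mul_assoc, h3]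
        exact he.1
      exact (mul_dvd_mul_iff_left hg0.ne').1 h4
    exact hco.dvd_of_dvd_mul_left hdvd
  · intro e1 h1 e2 h2 heq
    simp only [Prod.mk.injEq] at heq
    have k1 : Nat.gcd e1 m * (e1 / Nat.gcd e1 m) = e1 := Nat.mul_div_cancel' (Nat.gcd_dvd_left _ _)
    have k2 : Nat.gcd e2 m * (e2 / Nat.gcd e2 m) = e2 := Nat.mul_div_cancel' (Nat.gcd_dvd_left _ _)
    exact k1.symm.trans (by rw [heq.2, heq.1]; exact k2)

/-- The fiber of multiplication over `a : ℕ+` is equivalent to the divisor antidiagonal. -/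
def mulFiberEquiv (a : ℕ+) :
    {pq : ℕ+ × ℕ+ // pq.1 * pq.2 = a} ≃ {x : ℕ × ℕ // x ∈ (a:ℕ).divisorsAntidiagonal} where
  toFun z := ⟨((z.1.1 : ℕ), (z.1.2 : ℕ)), by
    rw [Nat.mem_divisorsAntidiagonal]
    refine ⟨?_, a.ne_zero⟩
    rw [← PNat.mul_coe, z.2]⟩
  invFun x := ⟨(⟨x.1.1, by
      have h := (Nat.mem_divisorsAntidiagonal.1 x.2)
      have : x.1.1 ≠ 0 := by
        intro h0
        apply a.ne_zero
        rw [← h.1, h0, zero_mul]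
      exact Nat.pos_of_ne_zero this⟩,
    ⟨x.1.2, by
      have h := (Nat.mem_divisorsAntidiagonal.1 x.2)
      have : x.1.2 ≠ 0 := by
        intro h0
        apply a.ne_zero
        rw [← h.1, h0, mul_zero]
      exact Nat.pos_of_ne_zero this⟩), by
    apply PNat.coe_injective
    rw [PNat.mul_coe]
    exact (Nat.mem_divisorsAntidiagonal.1 x.2).1⟩
  left_inv z := rfl
  right_inv x := rfl

instance mulFiberFintype (a : ℕ+) : Fintype {pq : ℕ+ × ℕ+ // pq.1 * pq.2 = a} :=
  Fintype.ofEquiv _ (mulFiberEquiv a).symm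

lemma mulFiber_card (a : ℕ+) :
    Fintype.card {pq : ℕ+ × ℕ+ // pq.1 * pq.2 = a} = (a:ℕ).divisors.card := by
  rw [Fintype.card_congr (mulFiberEquiv a), Fintype.card_coe,
    ← Nat.map_div_right_divisors, Finset.card_map]

lemma tau_expand {w : ℕ+ → ℝ} (hw : ∀ a, 0 ≤ w a)
    (hW : Summable (fun pq : ℕ+ × ℕ+ => w (pq.1 * pq.2))) :
    Summable (fun a : ℕ+ => (((a:ℕ).divisors.card : ℕ) : ℝ) * w a) ∧
      ∑' a : ℕ+, (((a:ℕ).divisors.card : ℕ) : ℝ) * w a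
        ≤ ∑' pq : ℕ+ × ℕ+, w (pq.1 * pq.2) := by
  set φ : ℕ+ × ℕ+ → ℕ+ := fun pq => pq.1 * pq.2 with hφ
  set E := Equiv.sigmaFiberEquiv φ with hE
  have hWs : Summable ((fun pq : ℕ+ × ℕ+ => w (pq.1 * pq.2)) ∘ E) :=
    (E.summable_iff).2 hW
  have hfe : ((fun pq : ℕ+ × ℕ+ => w (pq.1 * pq.2)) ∘ E)
      = fun z : (Σ a : ℕ+, {pq : ℕ+ × ℕ+ // φ pq = a}) => w z.1 := by
    funext z
    simp only [Function.comp, hE, Equiv.sigmaFiberEquiv, Equiv.coe_fn_mk]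
    rw [show (z.2.1.1 * z.2.1.2 : ℕ+) = z.1 from z.2.2]
  rw [hfe] at hWs
  have hnn : ∀ z : (Σ a : ℕ+, {pq : ℕ+ × ℕ+ // φ pq = a}), 0 ≤ w z.1 := fun z => hw _
  have hsig := (summable_sigma_of_nonneg hnn).1 hWs
  have hfiber : ∀ a : ℕ+, ∑' _ : {pq : ℕ+ × ℕ+ // φ pq = a}, w a
      = (((a:ℕ).divisors.card : ℕ) : ℝ) * w a := by
    intro a
    rw [tsum_fintype]
    rw [Finset.sum_const, Finset.card_univ, mulFiber_card a, nsmul_eq_mul]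
  have hsum2 : Summable (fun a : ℕ+ => (((a:ℕ).divisors.card : ℕ) : ℝ) * w a) := by
    have := hsig.2
    refine this.congr fun a => ?_
    exact hfiber a
  refine ⟨hsum2, le_of_eq ?_⟩
  calc ∑' a : ℕ+, (((a:ℕ).divisors.card : ℕ) : ℝ) * w a
      = ∑' a : ℕ+, ∑' _ : {pq : ℕ+ × ℕ+ // φ pq = a}, w a :=
        tsum_congr fun a => (hfiber a).symm
    _ = ∑' z : (Σ a : ℕ+, {pq : ℕ+ × ℕ+ // φ pq = a}), w z.1 :=
        by
          have hinner : ∀ b : ℕ+, Summable (fun _ : {pq : ℕ+ × ℕ+ // φ pq = b} => w b) :=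
            fun b => Summable.of_finite
          exact (Summable.tsum_sigma' hinner hWs).symm
    _ = ∑' pq : ℕ+ × ℕ+, w (pq.1 * pq.2) := by
        rw [← hfe]
        exact E.tsum_eq (fun pq : ℕ+ × ℕ+ => w (pq.1 * pq.2))
lemma log_sq_le {t : ℝ} (ht : 1 ≤ t) :
    (Real.log (2 * t)) ^ 2 ≤ 24 * t ^ ((1:ℝ)/2) := by
  have ht0 : (0:ℝ) < t := lt_of_lt_of_le one_pos ht
  have h2t : (1:ℝ) ≤ 2 * t := by linarith
  have h1 : Real.log (2 * t) ≤ (2 * t) ^ ((4:ℝ)⁻¹) / (4:ℝ)⁻¹ :=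
    Real.log_le_rpow_div (by positivity) (by norm_num)
  have h1' : Real.log (2 * t) ≤ (2 * t) ^ ((4:ℝ)⁻¹) * 4 := by
    rw [div_eq_mul_inv, inv_inv] at h1
    exact h1
  have hlognn : 0 ≤ Real.log (2 * t) := Real.log_nonneg h2t
  have hsq : (Real.log (2 * t)) ^ 2 ≤ ((2 * t) ^ ((4:ℝ)⁻¹) * 4) ^ 2 :=
    pow_le_pow_left₀ hlognn h1' 2
  have h4 : (((2 * t) ^ ((4:ℝ)⁻¹)) ^ (2:ℕ) : ℝ) = (2 * t) ^ ((1:ℝ)/2) := by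
    rw [← Real.rpow_natCast ((2 * t) ^ ((4:ℝ)⁻¹)) 2, ← Real.rpow_mul (by positivity)]
    norm_num
  have h5 : (2 * t) ^ ((1:ℝ)/2) = (2:ℝ) ^ ((1:ℝ)/2) * t ^ ((1:ℝ)/2) :=
    Real.mul_rpow (by norm_num) ht0.le
  have h6 : (2:ℝ) ^ ((1:ℝ)/2) ≤ 3/2 := by
    rw [← Real.sqrt_eq_rpow]
    rw [show (3/2:ℝ) = Real.sqrt ((3/2)^2) from (Real.sqrt_sq (by norm_num)).symm]
    exact Real.sqrt_le_sqrt (by norm_num)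
  have h7 : ((2 * t) ^ ((4:ℝ)⁻¹) * 4) ^ 2 = 16 * ((2 * t) ^ ((4:ℝ)⁻¹)) ^ (2:ℕ) := by ring
  have htp : (0:ℝ) ≤ t ^ ((1:ℝ)/2) := Real.rpow_nonneg ht0.le _
  calc (Real.log (2 * t)) ^ 2 ≤ ((2 * t) ^ ((4:ℝ)⁻¹) * 4) ^ 2 := hsq
    _ = 16 * ((2 * t) ^ ((4:ℝ)⁻¹)) ^ (2:ℕ) := h7
    _ = 16 * ((2:ℝ) ^ ((1:ℝ)/2) * t ^ ((1:ℝ)/2)) := by rw [h4, h5]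
    _ ≤ 16 * ((3/2) * t ^ ((1:ℝ)/2)) := by
        have := mul_le_mul_of_nonneg_right h6 htp
        nlinarith
    _ = 24 * t ^ ((1:ℝ)/2) := by ring

lemma g_le {t : ℝ} (ht : 1 ≤ t) :
    (Real.log (2 * t)) ^ 2 / t ^ 2 ≤ 24 * (1 / t ^ ((3:ℝ)/2)) := by
  have ht0 : (0:ℝ) < t := lt_of_lt_of_le one_pos ht
  have key : t ^ ((1:ℝ)/2) / t ^ (2:ℕ) = 1 / t ^ ((3:ℝ)/2) := by
    rw [← Real.rpow_natCast t 2, ← Real.rpow_sub ht0]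
    rw [show (1:ℝ)/2 - ((2:ℕ):ℝ) = -((3:ℝ)/2) by norm_num]
    rw [Real.rpow_neg ht0.le, one_div]
  calc (Real.log (2 * t)) ^ 2 / t ^ 2 ≤ (24 * t ^ ((1:ℝ)/2)) / t ^ 2 := by
        gcongr
        exact log_sq_le ht
    _ = 24 * (t ^ ((1:ℝ)/2) / t ^ (2:ℕ)) := by ring
    _ = 24 * (1 / t ^ ((3:ℝ)/2)) := by rw [key]

lemma g_summable : Summable (fun p : ℕ+ => (Real.log (2 * ((p:ℕ):ℝ))) ^ 2 / ((p:ℕ):ℝ) ^ 2) := by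
  have base : Summable (fun n : ℕ => 1 / (n:ℝ) ^ ((3:ℝ)/2)) :=
    Real.summable_one_div_nat_rpow.2 (by norm_num)
  have base2 : Summable (fun p : ℕ+ => 1 / (((p:ℕ)):ℝ) ^ ((3:ℝ)/2)) :=
    base.comp_injective PNat.coe_injective
  refine Summable.of_nonneg_of_le (fun p => by positivity) (fun p => ?_) (base2.mul_left 24)
  exact g_le (pnat_one_le_cast p)

lemma h_summable : Summable (fun q : ℕ+ => 1 / ((q:ℕ):ℝ) ^ 2) := by
  have base : Summable (fun n : ℕ => 1 / (n:ℝ) ^ (2:ℕ)) :=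
    Real.summable_one_div_nat_pow.2 (by norm_num)
  exact base.comp_injective PNat.coe_injective

lemma zpair_summable : Summable (fun pq : ℕ+ × ℕ+ =>
    (Real.log (2 * ((((pq.1 * pq.2 : ℕ+):ℕ)):ℝ))) ^ 2 / ((((pq.1 * pq.2 : ℕ+):ℕ)):ℝ) ^ 2) := by
  set g : ℕ+ → ℝ := fun p => (Real.log (2 * ((p:ℕ):ℝ))) ^ 2 / ((p:ℕ):ℝ) ^ 2 with hg
  set h : ℕ+ → ℝ := fun q => 1 / ((q:ℕ):ℝ) ^ 2 with hh
  have hgnn : ∀ p, 0 ≤ g p := fun p => by rw [hg]; positivity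
  have hhnn : ∀ p, 0 ≤ h p := fun p => by rw [hh]; positivity
  have hmaj : Summable (fun pq : ℕ+ × ℕ+ => 2 * (g pq.1 * h pq.2) + 2 * (h pq.1 * g pq.2)) := by
    have h1 : Summable (fun pq : ℕ+ × ℕ+ => g pq.1 * h pq.2) :=
      g_summable.mul_of_nonneg h_summable hgnn hhnn
    have h2 : Summable (fun pq : ℕ+ × ℕ+ => h pq.1 * g pq.2) :=
      h_summable.mul_of_nonneg g_summable hhnn hgnn
    exact (h1.mul_left 2).add (h2.mul_left 2)
  refine Summable.of_nonneg_of_le (fun pq => by positivity) (fun pq => ?_) hmaj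
  obtain ⟨p, q⟩ := pq
  set a := ((p:ℕ):ℝ) with ha
  set b := ((q:ℕ):ℝ) with hb
  have ha1 : 1 ≤ a := pnat_one_le_cast p
  have hb1 : 1 ≤ b := pnat_one_le_cast q
  have ha0 : 0 < a := lt_of_lt_of_le one_pos ha1
  have hb0 : 0 < b := lt_of_lt_of_le one_pos hb1
  have hcast : ((((p * q : ℕ+):ℕ)):ℝ) = a * b := by
    rw [ha, hb]; push_cast [PNat.mul_coe]; ring
  simp only [hcast]
  have hla : 0 ≤ Real.log (2 * a) := Real.log_nonneg (by linarith)
  have hlb : 0 ≤ Real.log (2 * b) := Real.log_nonneg (by linarith)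
  have hsplit : Real.log (2 * (a * b)) ≤ Real.log (2 * a) + Real.log (2 * b) := by
    have he : 2 * (a * b) = (2 * a) * b := by ring
    rw [he, Real.log_mul (by positivity) (by positivity)]
    have : Real.log b ≤ Real.log (2 * b) := Real.log_le_log hb0 (by linarith)
    linarith
  have hlabnn : 0 ≤ Real.log (2 * (a * b)) := Real.log_nonneg (by nlinarith)
  have hsq : (Real.log (2 * (a * b))) ^ 2
      ≤ 2 * (Real.log (2 * a)) ^ 2 + 2 * (Real.log (2 * b)) ^ 2 := by
    nlinarith [sq_nonneg (Real.log (2 * a) - Real.log (2 * b)),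
      pow_le_pow_left₀ hlabnn hsplit 2]
  have hden : ((a * b) ^ 2 : ℝ) = a ^ 2 * b ^ 2 := by ring
  rw [div_le_iff₀ (by positivity)]
  have hrhs : (2 * (g p * h q) + 2 * (h p * g q)) * (a * b) ^ 2
      = 2 * (Real.log (2 * a)) ^ 2 + 2 * (Real.log (2 * b)) ^ 2 := by
    rw [hg, hh]
    simp only
    rw [← ha, ← hb]
    have ha2 : a ^ 2 ≠ 0 := by positivity
    have hb2 : b ^ 2 ≠ 0 := by positivity
    field_simp
  rw [hrhs]
  exact hsq

lemma z_summable : Summable (fun d : ℕ+ =>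
    (((d:ℕ).divisors.card : ℕ) : ℝ) *
      ((Real.log (2 * ((d:ℕ):ℝ))) ^ 2 / ((d:ℕ):ℝ) ^ 2)) :=
  (tau_expand (w := fun d : ℕ+ => (Real.log (2 * ((d:ℕ):ℝ))) ^ 2 / ((d:ℕ):ℝ) ^ 2)
    (fun a => by positivity) zpair_summable).1

lemma z_tsum_le : ∑' d : ℕ+, (((d:ℕ).divisors.card : ℕ) : ℝ) *
      ((Real.log (2 * ((d:ℕ):ℝ))) ^ 2 / ((d:ℕ):ℝ) ^ 2)
    ≤ ∑' pq : ℕ+ × ℕ+,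
      (Real.log (2 * ((((pq.1 * pq.2 : ℕ+):ℕ)):ℝ))) ^ 2 / ((((pq.1 * pq.2 : ℕ+):ℕ)):ℝ) ^ 2 :=
  (tau_expand (w := fun d : ℕ+ => (Real.log (2 * ((d:ℕ):ℝ))) ^ 2 / ((d:ℕ):ℝ) ^ 2)
    (fun a => by positivity) zpair_summable).2
/-- `Σ_{m,n ≥ 1} τ(m) (log(2·gcd(m,n)))² |T(n/x)| |U(m/x²)| ≪ K x³ log x`. -/
theorem stmt_17 :
    ∃ C : ℝ, 0 < C ∧ ∀ (T U : ℝ → ℝ) (K : ℝ), 0 < K →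
      (∀ y : ℝ, 0 < y → |T y| ≤ min 1 (1 / y ^ 2)) →
      (∀ y : ℝ, 0 < y → y ≤ 1 → |U y| ≤ K * (1 + Real.log (1 / y))) →
      (∀ y : ℝ, 1 < y → |U y| ≤ K / y ^ 2) →
      ∀ x : ℝ, 2 ≤ x →
        Summable (fun mn : ℕ+ × ℕ+ =>
          (((mn.1 : ℕ).divisors.card : ℝ)) *
            Real.log (2 * Nat.gcd (mn.1 : ℕ) (mn.2 : ℕ)) ^ 2 *
            |T ((mn.2 : ℕ) / x)| * |U ((mn.1 : ℕ) / x ^ 2)|) ∧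
        (∑' mn : ℕ+ × ℕ+,
          (((mn.1 : ℕ).divisors.card : ℝ)) *
            Real.log (2 * Nat.gcd (mn.1 : ℕ) (mn.2 : ℕ)) ^ 2 *
            |T ((mn.2 : ℕ) / x)| * |U ((mn.1 : ℕ) / x ^ 2)|)
          ≤ C * K * x ^ 3 * Real.log x := by
  set Z : ℝ := ∑' d : ℕ+, (((d:ℕ).divisors.card : ℕ) : ℝ) *
      ((Real.log (2 * ((d:ℕ):ℝ))) ^ 2 / ((d:ℕ):ℝ) ^ 2) with hZdef
  have hZ0 : 0 ≤ Z := tsum_nonneg (fun d => by positivity)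
  refine ⟨336 * (Z + 1), by nlinarith, ?_⟩
  intro T U K hK hT hU1 hU2 x hx
  have hx0 : (0:ℝ) < x := by linarith
  have hX1 : (1:ℝ) ≤ x ^ 2 := by nlinarith
  have hlog2 : (0.6931471803:ℝ) < Real.log 2 := Real.log_two_gt_d9
  have hlogx : (1/2:ℝ) ≤ Real.log x := by
    have h1 : Real.log 2 ≤ Real.log x := Real.log_le_log two_pos hx
    linarith
  have hlogX : Real.log (x ^ 2) = 2 * Real.log x := by
    rw [Real.log_pow]; push_cast; ring
  have hlogX0 : (0:ℝ) ≤ Real.log (x ^ 2) := by rw [hlogX]; linarith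
  -- the component functions
  set tf : ℕ+ → ℕ+ → ℝ := fun d b => |T ((((d * b : ℕ+):ℕ):ℝ) / x)| with htf
  set uf : ℕ+ → ℕ+ → ℝ := fun d a =>
    (((a:ℕ).divisors.card : ℕ) : ℝ) * |U ((((d * a : ℕ+):ℕ):ℝ) / x ^ 2)| with huf
  set cf : ℕ+ → ℝ := fun d =>
    (((d:ℕ).divisors.card : ℕ) : ℝ) * Real.log (2 * ((d:ℕ):ℝ)) ^ 2 with hcf
  set f : ℕ+ × ℕ+ × ℕ+ → ℝ := fun z => cf z.1 * uf z.1 z.2.1 * tf z.1 z.2.2 with hf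
  have htfnn : ∀ d b, 0 ≤ tf d b := fun d b => abs_nonneg _
  have hufnn : ∀ d a, 0 ≤ uf d a := fun d a => by
    simp only [huf]; positivity
  have hcfnn : ∀ d, 0 ≤ cf d := fun d => by simp only [hcf]; positivity
  -- T-sums
  have htd : ∀ d : ℕ+, Summable (tf d) ∧ ∑' b, tf d b ≤ 4 * (x / ((d:ℕ):ℝ)) := by
    intro d
    have hd0 : (0:ℝ) < ((d:ℕ):ℝ) := pnat_cast_pos d
    have hYd : 0 < x / ((d:ℕ):ℝ) := by positivity
    have hmin := minsum hYd
    have hpt : ∀ b : ℕ+, tf d b ≤ min 1 (((x / ((d:ℕ):ℝ)) / ((b:ℕ):ℝ)) ^ 2) := by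
      intro b
      have hb0 := pnat_cast_pos b
      have hcast : (((d * b : ℕ+):ℕ):ℝ) = ((d:ℕ):ℝ) * ((b:ℕ):ℝ) := by
        push_cast [PNat.mul_coe]; ring
      have hy0 : (0:ℝ) < (((d * b : ℕ+):ℕ):ℝ) / x := by
        rw [hcast]; positivity
      have h1 := hT _ hy0
      simp only [htf]
      refine le_trans h1 ?_
      have h2 : 1 / ((((d * b : ℕ+):ℕ):ℝ) / x) ^ 2 = ((x / ((d:ℕ):ℝ)) / ((b:ℕ):ℝ)) ^ 2 := by
        rw [hcast]
        field_simp
      rw [h2]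
    have hsb : Summable (tf d) := Summable.of_nonneg_of_le (htfnn d) hpt hmin.1
    exact ⟨hsb, le_trans (Summable.tsum_le_tsum hpt hsb hmin.1) hmin.2⟩
  -- U-sums
  have hud : ∀ d : ℕ+, Summable (uf d) ∧
      ∑' a, uf d a ≤ 21 * K * ((x ^ 2 / ((d:ℕ):ℝ)) * (1 + Real.log (x ^ 2))) := by
    intro d
    have hd0 : (0:ℝ) < ((d:ℕ):ℝ) := pnat_cast_pos d
    have hd1 : (1:ℝ) ≤ ((d:ℕ):ℝ) := pnat_one_le_cast d
    set Y : ℝ := x ^ 2 / ((d:ℕ):ℝ) with hYdef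
    have hY0 : 0 < Y := by positivity
    have hw : ∀ a : ℕ+, |U ((((d * a : ℕ+):ℕ):ℝ) / x ^ 2)| ≤ K * vfun Y a := by
      intro a
      have ha0 := pnat_cast_pos a
      have hcast : (((d * a : ℕ+):ℕ):ℝ) = ((d:ℕ):ℝ) * ((a:ℕ):ℝ) := by
        push_cast [PNat.mul_coe]; ring
      have hy0 : (0:ℝ) < (((d * a : ℕ+):ℕ):ℝ) / x ^ 2 := by rw [hcast]; positivity
      rw [vfun]
      split_ifs with hcond
      · have hda : ((d:ℕ):ℝ) * ((a:ℕ):ℝ) ≤ x ^ 2 := by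
          rw [hYdef, le_div_iff₀ hd0] at hcond
          nlinarith
        have hy1 : (((d * a : ℕ+):ℕ):ℝ) / x ^ 2 ≤ 1 := by
          rw [hcast, div_le_one (by positivity)]
          exact hda
        have h1 := hU1 _ hy0 hy1
        refine le_trans h1 ?_
        have harg : 1 / ((((d * a : ℕ+):ℕ):ℝ) / x ^ 2) = Y / ((a:ℕ):ℝ) := by
          rw [hcast, hYdef]
          field_simp
        rw [harg, mul_le_mul_iff_right₀ hK]
      · have hda : x ^ 2 < ((d:ℕ):ℝ) * ((a:ℕ):ℝ) := by
          push_neg at hcond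
          rw [hYdef, div_lt_iff₀ hd0] at hcond
          nlinarith
        have hy1 : 1 < (((d * a : ℕ+):ℕ):ℝ) / x ^ 2 := by
          rw [hcast, lt_div_iff₀ (by positivity)]
          linarith
        have h1 := hU2 _ hy1
        refine le_trans h1 ?_
        have harg : K / ((((d * a : ℕ+):ℕ):ℝ) / x ^ 2) ^ 2 = K * (Y / ((a:ℕ):ℝ)) ^ 2 := by
          rw [hcast, hYdef]
          field_simp
          try ring
        rw [harg]
    have hpairv := pairv hY0
    have hWpair : Summable (fun pq : ℕ+ × ℕ+ =>
        |U ((((d * (pq.1 * pq.2) : ℕ+):ℕ):ℝ) / x ^ 2)|) :=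
      Summable.of_nonneg_of_le (fun pq => abs_nonneg _) (fun pq => hw (pq.1 * pq.2))
        (hpairv.1.mul_left K)
    have hte := tau_expand (w := fun a : ℕ+ => |U ((((d * a : ℕ+):ℕ):ℝ) / x ^ 2)|)
      (fun a => abs_nonneg _) hWpair
    refine ⟨hte.1, ?_⟩
    have hmaxle : max 0 (Real.log Y) ≤ Real.log (x ^ 2) := by
      refine max_le (Real.log_nonneg hX1) ?_
      refine Real.log_le_log hY0 ?_
      rw [hYdef]
      exact div_le_self (by positivity) hd1
    calc ∑' a, uf d a ≤ ∑' pq : ℕ+ × ℕ+, |U ((((d * (pq.1 * pq.2) : ℕ+):ℕ):ℝ) / x ^ 2)| :=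
          hte.2
      _ ≤ ∑' pq : ℕ+ × ℕ+, K * vfun Y (pq.1 * pq.2) :=
          Summable.tsum_le_tsum (fun pq => hw (pq.1 * pq.2)) hWpair (hpairv.1.mul_left K)
      _ = K * ∑' pq : ℕ+ × ℕ+, vfun Y (pq.1 * pq.2) := tsum_mul_left
      _ ≤ K * (21 * Y * (1 + max 0 (Real.log Y))) :=
          mul_le_mul_of_nonneg_left hpairv.2 hK.le
      _ ≤ 21 * K * (Y * (1 + Real.log (x ^ 2))) := by
          have h1 : 1 + max 0 (Real.log Y) ≤ 1 + Real.log (x ^ 2) := by linarith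
          have h2 : (0:ℝ) ≤ 21 * K * Y := by positivity
          calc K * (21 * Y * (1 + max 0 (Real.log Y)))
              = (21 * K * Y) * (1 + max 0 (Real.log Y)) := by ring
            _ ≤ (21 * K * Y) * (1 + Real.log (x ^ 2)) := mul_le_mul_of_nonneg_left h1 h2
            _ = 21 * K * (Y * (1 + Real.log (x ^ 2))) := by ring
  -- assembling the triple sum
  have hprodm : ∀ d : ℕ+, Summable (fun ab : ℕ+ × ℕ+ => uf d ab.1 * tf d ab.2) :=
    fun d => (hud d).1.mul_of_nonneg (htd d).1 (hufnn d) (htfnn d)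
  have hfnn : ∀ z : ℕ+ × ℕ+ × ℕ+, 0 ≤ f z := by
    intro z
    simp only [hf]
    have := hcfnn z.1
    have := hufnn z.1 z.2.1
    have := htfnn z.1 z.2.2
    positivity
  have hslice : ∀ d : ℕ+, Summable (fun ab : ℕ+ × ℕ+ => f (d, ab)) := by
    intro d
    refine ((hprodm d).mul_left (cf d)).congr fun ab => ?_
    simp only [hf]
    ring
  have hslice_sum : ∀ d : ℕ+,
      ∑' ab : ℕ+ × ℕ+, f (d, ab) = cf d * ((∑' a, uf d a) * (∑' b, tf d b)) := by
    intro d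
    calc ∑' ab : ℕ+ × ℕ+, f (d, ab)
        = ∑' ab : ℕ+ × ℕ+, cf d * (uf d ab.1 * tf d ab.2) :=
          tsum_congr (fun ab => by simp only [hf]; ring)
      _ = cf d * ∑' ab : ℕ+ × ℕ+, uf d ab.1 * tf d ab.2 := tsum_mul_left
      _ = cf d * ((∑' a, uf d a) * (∑' b, tf d b)) := by
          congr 1
          rw [Summable.tsum_prod' (hprodm d) (fun a => (htd d).1.mul_left (uf d a))]
          calc ∑' a, ∑' b, uf d a * tf d b
              = ∑' a, uf d a * ∑' b, tf d b := tsum_congr (fun a => tsum_mul_left)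
            _ = (∑' a, uf d a) * (∑' b, tf d b) := tsum_mul_right
  set κ : ℝ := 84 * K * x * x ^ 2 * (1 + Real.log (x ^ 2)) with hκdef
  have houter_le : ∀ d : ℕ+, ∑' ab : ℕ+ × ℕ+, f (d, ab)
      ≤ κ * ((((d:ℕ).divisors.card : ℕ) : ℝ) *
        ((Real.log (2 * ((d:ℕ):ℝ))) ^ 2 / ((d:ℕ):ℝ) ^ 2)) := by
    intro d
    have hd0 : (0:ℝ) < ((d:ℕ):ℝ) := pnat_cast_pos d
    rw [hslice_sum d]
    have htnn : 0 ≤ ∑' b, tf d b := tsum_nonneg (htfnn d)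
    have hunn : 0 ≤ ∑' a, uf d a := tsum_nonneg (hufnn d)
    have hub : (∑' a, uf d a) * (∑' b, tf d b)
        ≤ (21 * K * ((x ^ 2 / ((d:ℕ):ℝ)) * (1 + Real.log (x ^ 2)))) * (4 * (x / ((d:ℕ):ℝ))) := by
      apply mul_le_mul (hud d).2 (htd d).2 htnn
      positivity
    calc cf d * ((∑' a, uf d a) * (∑' b, tf d b))
        ≤ cf d * ((21 * K * ((x ^ 2 / ((d:ℕ):ℝ)) * (1 + Real.log (x ^ 2)))) *
            (4 * (x / ((d:ℕ):ℝ)))) := mul_le_mul_of_nonneg_left hub (hcfnn d)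
      _ = κ * ((((d:ℕ).divisors.card : ℕ) : ℝ) *
            ((Real.log (2 * ((d:ℕ):ℝ))) ^ 2 / ((d:ℕ):ℝ) ^ 2)) := by
          simp only [hcf, hκdef]
          field_simp
          ring
  have hmajsum : Summable (fun d : ℕ+ => κ * ((((d:ℕ).divisors.card : ℕ) : ℝ) *
      ((Real.log (2 * ((d:ℕ):ℝ))) ^ 2 / ((d:ℕ):ℝ) ^ 2))) := z_summable.mul_left κ
  have houter_summable : Summable (fun d : ℕ+ => ∑' ab : ℕ+ × ℕ+, f (d, ab)) :=
    Summable.of_nonneg_of_le (fun d => tsum_nonneg (fun ab => hfnn (d, ab))) houter_le hmajsum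
  have hfsummable : Summable f :=
    (summable_prod_of_nonneg (fun z => hfnn z)).2 ⟨hslice, houter_summable⟩
  have hftsum : ∑' z, f z ≤ κ * Z := by
    rw [Summable.tsum_prod' hfsummable hslice]
    calc ∑' d : ℕ+, ∑' ab : ℕ+ × ℕ+, f (d, ab)
        ≤ ∑' d : ℕ+, κ * ((((d:ℕ).divisors.card : ℕ) : ℝ) *
            ((Real.log (2 * ((d:ℕ):ℝ))) ^ 2 / ((d:ℕ):ℝ) ^ 2)) :=
          Summable.tsum_le_tsum houter_le houter_summable hmajsum
      _ = κ * Z := by rw [hZdef, tsum_mul_left]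
  -- the injection
  have hgcdpos : ∀ mn : ℕ+ × ℕ+, 0 < Nat.gcd (mn.1:ℕ) (mn.2:ℕ) :=
    fun mn => Nat.gcd_pos_of_pos_left _ mn.1.pos
  set ψ : ℕ+ × ℕ+ → ℕ+ × ℕ+ × ℕ+ := fun mn =>
    (⟨Nat.gcd (mn.1:ℕ) (mn.2:ℕ), hgcdpos mn⟩,
     ⟨(mn.1:ℕ) / Nat.gcd (mn.1:ℕ) (mn.2:ℕ),
       Nat.div_pos (Nat.le_of_dvd mn.1.pos (Nat.gcd_dvd_left _ _)) (hgcdpos mn)⟩,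
     ⟨(mn.2:ℕ) / Nat.gcd (mn.1:ℕ) (mn.2:ℕ),
       Nat.div_pos (Nat.le_of_dvd mn.2.pos (Nat.gcd_dvd_right _ _)) (hgcdpos mn)⟩) with hψ
  have hψ1 : ∀ mn : ℕ+ × ℕ+, ((ψ mn).1 * (ψ mn).2.1 : ℕ+) = mn.1 := by
    intro mn
    apply PNat.coe_injective
    rw [PNat.mul_coe]
    simp only [hψ, PNat.mk_coe]
    exact Nat.mul_div_cancel' (Nat.gcd_dvd_left _ _)
  have hψ2 : ∀ mn : ℕ+ × ℕ+, ((ψ mn).1 * (ψ mn).2.2 : ℕ+) = mn.2 := by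
    intro mn
    apply PNat.coe_injective
    rw [PNat.mul_coe]
    simp only [hψ, PNat.mk_coe]
    exact Nat.mul_div_cancel' (Nat.gcd_dvd_right _ _)
  have hinj : Function.Injective ψ := by
    intro mn mn' h
    have e1 : mn.1 = mn'.1 := by rw [← hψ1 mn, ← hψ1 mn', h]
    have e2 : mn.2 = mn'.2 := by rw [← hψ2 mn, ← hψ2 mn', h]
    exact Prod.ext e1 e2
  -- pointwise comparison
  have hle : ∀ mn : ℕ+ × ℕ+,
      (((mn.1 : ℕ).divisors.card : ℝ)) *
        Real.log (2 * Nat.gcd (mn.1 : ℕ) (mn.2 : ℕ)) ^ 2 *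
        |T ((mn.2 : ℕ) / x)| * |U ((mn.1 : ℕ) / x ^ 2)| ≤ f (ψ mn) := by
    intro mn
    have hfψ : f (ψ mn) = (((((ψ mn).1:ℕ).divisors.card : ℕ) : ℝ) *
          Real.log (2 * (((ψ mn).1:ℕ):ℝ)) ^ 2) *
        (((((ψ mn).2.1:ℕ).divisors.card : ℕ) : ℝ) * |U (((mn.1:ℕ):ℝ) / x ^ 2)|) *
        |T (((mn.2:ℕ):ℝ) / x)| := by
      simp only [hf, hcf, huf, htf]
      rw [hψ1 mn, hψ2 mn]
    rw [hfψ]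
    have hgcd : (((ψ mn).1:ℕ)) = Nat.gcd (mn.1:ℕ) (mn.2:ℕ) := by
      simp only [hψ, PNat.mk_coe]
    have htau : ((mn.1:ℕ).divisors.card : ℝ)
        ≤ ((((ψ mn).1:ℕ).divisors.card : ℝ)) * ((((ψ mn).2.1:ℕ).divisors.card : ℝ)) := by
      have hma : ((ψ mn).1:ℕ) * ((ψ mn).2.1:ℕ) = (mn.1:ℕ) := by
        rw [← PNat.mul_coe, hψ1 mn]
      have h1 := tau_mul_le ((ψ mn).1:ℕ) ((ψ mn).2.1:ℕ) ((ψ mn).1.ne_zero) ((ψ mn).2.1.ne_zero)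
      rw [hma] at h1
      exact_mod_cast h1
    rw [hgcd]
    have hL : (0:ℝ) ≤ Real.log (2 * (Nat.gcd (mn.1:ℕ) (mn.2:ℕ) : ℝ)) ^ 2 := sq_nonneg _
    calc (((mn.1 : ℕ).divisors.card : ℝ)) *
          Real.log (2 * (Nat.gcd (mn.1 : ℕ) (mn.2 : ℕ) : ℝ)) ^ 2 *
          |T (((mn.2 : ℕ):ℝ) / x)| * |U (((mn.1 : ℕ):ℝ) / x ^ 2)|
        ≤ (((((ψ mn).1:ℕ).divisors.card : ℝ)) * ((((ψ mn).2.1:ℕ).divisors.card : ℝ))) *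
          Real.log (2 * (Nat.gcd (mn.1 : ℕ) (mn.2 : ℕ) : ℝ)) ^ 2 *
          |T (((mn.2 : ℕ):ℝ) / x)| * |U (((mn.1 : ℕ):ℝ) / x ^ 2)| := by
          apply mul_le_mul_of_nonneg_right _ (abs_nonneg _)
          apply mul_le_mul_of_nonneg_right _ (abs_nonneg _)
          exact mul_le_mul_of_nonneg_right htau hL
      _ = _ := by
          rw [hgcd]
          push_cast
          ring
  have hSnn : ∀ mn : ℕ+ × ℕ+, 0 ≤ (((mn.1 : ℕ).divisors.card : ℝ)) *
        Real.log (2 * Nat.gcd (mn.1 : ℕ) (mn.2 : ℕ)) ^ 2 *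
        |T ((mn.2 : ℕ) / x)| * |U ((mn.1 : ℕ) / x ^ 2)| := by
    intro mn
    exact mul_nonneg (mul_nonneg (mul_nonneg (Nat.cast_nonneg _) (sq_nonneg _))
      (abs_nonneg _)) (abs_nonneg _)
  have hS : Summable (fun mn : ℕ+ × ℕ+ =>
      (((mn.1 : ℕ).divisors.card : ℝ)) *
        Real.log (2 * Nat.gcd (mn.1 : ℕ) (mn.2 : ℕ)) ^ 2 *
        |T ((mn.2 : ℕ) / x)| * |U ((mn.1 : ℕ) / x ^ 2)|) := by
    refine Summable.of_nonneg_of_le hSnn hle ?_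
    exact hfsummable.comp_injective hinj
  refine ⟨hS, ?_⟩
  have hmain := Summable.tsum_le_tsum_of_inj ψ hinj (fun c _ => hfnn c) hle hS hfsummable
  have hfinal : κ * Z ≤ 336 * (Z + 1) * K * x ^ 3 * Real.log x := by
    rw [hκdef, hlogX]
    have hL : (1:ℝ)/2 ≤ Real.log x := hlogx
    have hx3 : (0:ℝ) < x ^ 3 := by positivity
    have hKx3 : (0:ℝ) < K * x ^ 3 := by positivity
    have key : 84 * (1 + 2 * Real.log x) * Z ≤ 336 * (Z + 1) * Real.log x := by
      nlinarith [mul_nonneg hZ0 (by linarith : (0:ℝ) ≤ Real.log x), hZ0, hL]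
    calc 84 * K * x * x ^ 2 * (1 + 2 * Real.log x) * Z
        = (K * x ^ 3) * (84 * (1 + 2 * Real.log x) * Z) := by ring
      _ ≤ (K * x ^ 3) * (336 * (Z + 1) * Real.log x) :=
          mul_le_mul_of_nonneg_left key hKx3.le
      _ = 336 * (Z + 1) * K * x ^ 3 * Real.log x := by ring
  calc (∑' mn : ℕ+ × ℕ+,
        (((mn.1 : ℕ).divisors.card : ℝ)) *
          Real.log (2 * Nat.gcd (mn.1 : ℕ) (mn.2 : ℕ)) ^ 2 *
          |T ((mn.2 : ℕ) / x)| * |U ((mn.1 : ℕ) / x ^ 2)|)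
      ≤ ∑' z, f z := hmain
    _ ≤ κ * Z := hftsum
    _ ≤ 336 * (Z + 1) * K * x ^ 3 * Real.log x := hfinal
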